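/- Let f : F_q → F_q be an odd bijection (f(−a) = −f(a)) and M_{x,y} = (1/q) ∑_{a} ζ_p^{tr(f(a)y − ax)}. Then for each t ∈ F_q, the matrix M R^t M^⊤ equals ∑_{a ∈ F_q} M_{a,t} R^a, where R^t is the F_q-circulant cycle matrix with (R^t)_{x,y} = 1 iff y − x = t; in particular M R^t M^⊤ is F_q-circulant. -/

import Mathlib

/-- For an odd bijection `f` of `F_q` and
`M_{x,y} = (1/q) ∑_a ζ_p^{tr(f(a)y - ax)}`, the matrix `M R^t M^⊤` equals
`∑_a M_{a,t} R^a`; in particular `M R^t M^⊤` is `F_q`-circulant. -/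
theorem conjugated_cycle_matrix_is_circulant
    (p : ℕ) [Fact p.Prime]
    (F : Type*) [Field F] [Fintype F] [DecidableEq F] [Algebra (ZMod p) F]
    (f : F → F) (hf : Function.Bijective f) (hodd : ∀ a : F, f (-a) = -f a)
    (t : F) :
    letI ζ : ℂ := Complex.exp (2 * Real.pi * Complex.I / p)
    letI M : Matrix F F ℂ := fun x y => (1 / (Fintype.card F : ℂ)) *
      ∑ a : F, ζ ^ (Algebra.trace (ZMod p) F (f a * y - a * x)).val
    letI R : F → Matrix F F ℂ := fun u => fun x y => if y - x = u then 1 else 0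
    M * R t * M.transpose = ∑ a : F, M a t • R a ∧
    (∀ u x y : F, (M * R t * M.transpose) (x + u) (y + u) = (M * R t * M.transpose) x y) := by
  classical
  have hp : p.Prime := Fact.out
  have hp0 : (p : ℂ) ≠ 0 := Nat.cast_ne_zero.mpr hp.ne_zero
  set ζ : ℂ := Complex.exp (2 * Real.pi * Complex.I / p) with hζdef
  set q : ℂ := (Fintype.card F : ℂ) with hqdef
  have hq0 : q ≠ 0 := Nat.cast_ne_zero.mpr Fintype.card_ne_zero
  set M : Matrix F F ℂ := fun x y => (1 / q) *
    ∑ a : F, ζ ^ (Algebra.trace (ZMod p) F (f a * y - a * x)).val with hMdef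
  set R : F → Matrix F F ℂ := fun u x y => if y - x = u then 1 else 0 with hRdef
  set e : F → ℂ := fun z => ζ ^ (Algebra.trace (ZMod p) F z).val with he
  have hM : ∀ x y : F, M x y = (1 / q) * ∑ a : F, e (f a * y - a * x) := fun _ _ => rfl
  have hR : ∀ u x y : F, R u x y = if y - x = u then 1 else 0 := fun _ _ _ => rfl
  -- ζ^p = 1
  have hζp : ζ ^ p = 1 := by
    show Complex.exp (2 * Real.pi * Complex.I / p) ^ p = 1
    rw [← Complex.exp_nat_mul]
    rw [show (p : ℂ) * (2 * Real.pi * Complex.I / p) = 2 * Real.pi * Complex.I by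
      field_simp]
    exact Complex.exp_two_pi_mul_I
  have he0 : e 0 = 1 := by simp [he]
  have he_add : ∀ a b : F, e (a + b) = e a * e b := by
    intro a b
    simp only [he, map_add]
    rw [ZMod.val_add, ← pow_eq_pow_mod _ hζp, pow_add]
  -- the character is nontrivial
  have hψsum : ∑ v : F, e v = 0 := by
    let ψ : AddChar F ℂ := { toFun := e, map_zero_eq_one' := he0, map_add_eq_mul' := he_add }
    have hψe : ∀ v : F, ψ v = e v := fun _ => rfl
    have hψne : ψ ≠ 0 := by
      rw [← AddChar.one_eq_zero, AddChar.ne_one_iff]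
      have htr := Algebra.trace_ne_zero (ZMod p) F
      obtain ⟨b, hb⟩ := DFunLike.ne_iff.mp htr
      have hb' : Algebra.trace (ZMod p) F b ≠ 0 := by simpa using hb
      refine ⟨b, ?_⟩
      rw [hψe]
      have hprim := Complex.isPrimitiveRoot_exp p hp.ne_zero
      have hvpos : 0 < (Algebra.trace (ZMod p) F b).val := by
        rcases Nat.eq_zero_or_pos (Algebra.trace (ZMod p) F b).val with h | h
        · exact absurd ((ZMod.val_eq_zero _).mp h) hb'
        · exact h
      have hvlt : (Algebra.trace (ZMod p) F b).val < p := ZMod.val_lt _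
      exact hprim.pow_ne_one_of_pos_of_lt hvpos.ne' hvlt
    have := AddChar.sum_eq_zero_iff_ne_zero.mpr hψne
    simpa [hψe] using this
  have hsum : ∀ c : F, ∑ u : F, e (c * u) = if c = 0 then q else 0 := by
    intro c
    by_cases hc : c = 0
    · simp [hc, he0, hqdef, Finset.card_univ]
    · rw [if_neg hc, ← hψsum]
      exact Fintype.sum_equiv (Equiv.mulLeft₀ c hc) _ _ fun u => rfl
  have hcond : ∀ a b : F, f a + f b = 0 ↔ a = -b := by
    intro a b
    constructor
    · intro h
      apply hf.injective
      rw [hodd, eq_neg_of_add_eq_zero_left h]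
    · rintro rfl
      rw [hodd]; ring
  -- the key entry computation
  have key : ∀ x y : F, (M * R t * M.transpose) x y
      = (1 / q) * ∑ b : F, e (f b * t - b * (y - x)) := by
    intro x y
    have step1 : (M * R t * M.transpose) x y = ∑ u : F, M x u * M y (u + t) := by
      simp only [Matrix.mul_apply, Matrix.transpose_apply]
      have inner : ∀ j : F, (∑ u : F, M x u * R t u j) = M x (j - t) := by
        intro j
        have : ∀ u : F, M x u * R t u j = if u = j - t then M x u else 0 := by
          intro u
          rw [hR]
          split_ifs with h1 h2 h2
          · rw [mul_one]
          · exact absurd (by rw [← h1]; ring) h2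
          · exact absurd (by rw [h2]; ring) h1
          · rw [mul_zero]
        rw [Finset.sum_congr rfl fun u _ => this u, Finset.sum_ite_eq' Finset.univ (j - t)]
        simp
      rw [Finset.sum_congr rfl fun j _ => by rw [inner j]]
      exact (Fintype.sum_equiv (Equiv.addRight t) _ _ fun u => by
        simp).symm
    have step2 : ∀ u : F, M x u * M y (u + t)
        = (1 / q) * (1 / q) * ∑ a : F, ∑ b : F,
            e ((f a + f b) * u) * e (f b * t - a * x - b * y) := by
      intro u
      rw [hM, hM, mul_mul_mul_comm, Finset.sum_mul_sum]
      congr 1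
      refine Finset.sum_congr rfl fun a _ => Finset.sum_congr rfl fun b _ => ?_
      rw [← he_add, ← he_add]
      congr 1
      ring
    calc (M * R t * M.transpose) x y
        = ∑ u : F, M x u * M y (u + t) := step1
      _ = (1 / q) * (1 / q) * ∑ u : F, ∑ a : F, ∑ b : F,
            e ((f a + f b) * u) * e (f b * t - a * x - b * y) := by
          rw [Finset.mul_sum]
          exact Finset.sum_congr rfl fun u _ => step2 u
      _ = (1 / q) * (1 / q) * ∑ a : F, ∑ b : F,
            (∑ u : F, e ((f a + f b) * u)) * e (f b * t - a * x - b * y) := by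
          rw [Finset.sum_comm]
          congr 1
          refine Finset.sum_congr rfl fun a _ => ?_
          rw [Finset.sum_comm]
          refine Finset.sum_congr rfl fun b _ => ?_
          rw [Finset.sum_mul]
      _ = (1 / q) * (1 / q) * ∑ a : F, ∑ b : F,
            (if a = -b then q else 0) * e (f b * t - a * x - b * y) := by
          congr 1
          refine Finset.sum_congr rfl fun a _ => Finset.sum_congr rfl fun b _ => ?_
          rw [hsum, if_congr (hcond a b) rfl rfl]
      _ = (1 / q) * (1 / q) * ∑ b : F, q * e (f b * t - (-b) * x - b * y) := by
          congr 1
          rw [Finset.sum_comm]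
          refine Finset.sum_congr rfl fun b _ => ?_
          rw [Finset.sum_congr rfl fun a _ => (ite_mul (a = -b) q 0 _).trans
            (by rw [zero_mul]), Finset.sum_ite_eq' Finset.univ (-b)]
          simp
      _ = (1 / q) * ∑ b : F, e (f b * t - b * (y - x)) := by
          have hqq : (1 / q) * (1 / q) * q = 1 / q := by field_simp
          rw [← Finset.mul_sum, ← mul_assoc, hqq]
          congr 1
          refine Finset.sum_congr rfl fun b _ => ?_
          congr 1
          ring
  constructor
  · ext x y
    rw [key]
    rw [Matrix.sum_apply]
    have : ∀ a : F, (M a t • R a) x y = if a = y - x then M a t else 0 := by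
      intro a
      rw [Matrix.smul_apply, hR, smul_eq_mul]
      split_ifs with h1 h2 h2
      · rw [mul_one]
      · exact absurd h1.symm h2
      · exact absurd h2.symm h1
      · rw [mul_zero]
    rw [Finset.sum_congr rfl fun a _ => this a, Finset.sum_ite_eq' Finset.univ (y - x)]
    simp [hM]
  · intro u x y
    rw [key, key, add_sub_add_right_eq_sub]
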